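/- arXiv:1402.5040 — 4 statements merged into one kernel-verified Lean document; each statement's English description precedes it below -/
import Mathlib

section
/- Let n ≥ 1, ρ > 0, and let u_{n+1}^ρ := e_{n+1} − L_n^ρ e_{n+1} (where e_{n+1}(x) = x^{n+1}). Then for every x ∈ (0,1) one has (1/B(nρx, nρ(1−x))) ∫₀¹ t^{nρx−1}(1−t)^{nρ(1−x)−1} u_{n+1}^ρ(t) dt = ((nρ)^{n+1}/(nρ)^{\overline{n+1}}) ∏_{k=0}^{n} (x − k/n), where x^{\overline{m}} = x(x+1)⋯(x+m−1) is the rising factorial; that is, the Lupaş–Mühlbach Beta operator of order nρ maps u_{n+1}^ρ to ((nρ)^{n+1}/(nρ)^{\overline{n+1}}) x(x−1)(x−1/n)⋯(x−(n−1)/n). -/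
open MeasureTheory

/-- Euler Beta function `B(a,b) = ∫₀¹ t^(a-1) (1-t)^(b-1) dt`. -/
noncomputable def betaFn (a b : ℝ) : ℝ :=
  ∫ t in (0:ℝ)..1, t ^ (a - 1) * (1 - t) ^ (b - 1)

/-- The functionals `F_{n,k}^ρ`. -/
noncomputable def Ffun (n k : ℕ) (ρ : ℝ) (f : ℝ → ℝ) : ℝ :=
  if k = 0 then f 0
  else if k = n then f 1
  else (betaFn ((k : ℝ) * ρ) (((n : ℝ) - (k : ℝ)) * ρ))⁻¹ *
    ∫ t in (0:ℝ)..1, t ^ ((k : ℝ) * ρ - 1) * (1 - t) ^ (((n : ℝ) - (k : ℝ)) * ρ - 1) * f t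

/-- Bernstein basis polynomial `p_{n,k}(x)`. -/
noncomputable def bern (n k : ℕ) (x : ℝ) : ℝ :=
  (n.choose k : ℝ) * x ^ k * (1 - x) ^ (n - k)

/-- The operator `U_n^ρ`. -/
noncomputable def Uop (n : ℕ) (ρ : ℝ) (f : ℝ → ℝ) (x : ℝ) : ℝ :=
  ∑ k ∈ Finset.range (n + 1), Ffun n k ρ f * bern n k x

lemma Gamma_add_nat {s : ℝ} (hs : 0 < s) (m : ℕ) :
    Real.Gamma (s + m) = (ascPochhammer ℝ m).eval s * Real.Gamma s := by
  induction m with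
  | zero => simp
  | succ m ih =>
    have h1 : s + (m+1 : ℕ) = (s + m) + 1 := by push_cast; ring
    rw [h1, Real.Gamma_add_one (by positivity), ih, ascPochhammer_succ_right]
    simp [Polynomial.eval_mul]
    ring

lemma beta_intable {a b : ℝ} (ha : 0 < a) (hb : 0 < b) :
    IntervalIntegrable (fun t : ℝ => t ^ (a - 1) * (1 - t) ^ (b - 1)) volume 0 1 := by
  have h := Complex.betaIntegral_convergent (u := (a:ℂ)) (v := (b:ℂ)) (by simpa) (by simpa)
  rw [intervalIntegrable_iff_integrableOn_Ioc_of_le (by norm_num)] at h ⊢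
  have heq : Set.EqOn (fun t : ℝ => t ^ (a - 1) * (1 - t) ^ (b - 1))
      (fun t : ℝ => ((t:ℂ) ^ ((a:ℂ) - 1) * (1 - (t:ℂ)) ^ ((b:ℂ) - 1)).re) (Set.Ioc 0 1) := by
    intro t ht
    have h0 : (0:ℝ) ≤ t := ht.1.le
    have h1 : (0:ℝ) ≤ 1 - t := by linarith [ht.2]
    have e1 : ((t:ℂ)) ^ ((a:ℂ) - 1) = ((t ^ (a-1) : ℝ) : ℂ) := by
      rw [Complex.ofReal_cpow h0]; norm_num
    have e2 : ((1 - (t:ℂ))) ^ ((b:ℂ) - 1) = (((1-t) ^ (b-1) : ℝ) : ℂ) := by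
      rw [Complex.ofReal_cpow h1]; push_cast; norm_num
    simp [e1, e2, ← Complex.ofReal_mul]
  exact MeasureTheory.IntegrableOn.congr_fun h.re heq.symm measurableSet_Ioc

lemma betaFn_eq_Gamma {a b : ℝ} (ha : 0 < a) (hb : 0 < b) :
    betaFn a b = Real.Gamma a * Real.Gamma b / Real.Gamma (a + b) := by
  have h := Complex.Gamma_mul_Gamma_eq_betaIntegral (s := (a:ℂ)) (t := (b:ℂ)) (by simpa) (by simpa)
  have hint : Complex.betaIntegral a b = ((betaFn a b : ℝ) : ℂ) := by
    rw [Complex.betaIntegral, betaFn]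
    rw [← intervalIntegral.integral_ofReal]
    apply intervalIntegral.integral_congr
    intro t ht
    rw [Set.uIcc_of_le (by norm_num)] at ht
    have h0 : (0:ℝ) ≤ t := ht.1
    have h1 : (0:ℝ) ≤ 1 - t := by linarith [ht.2]
    have e1 : ((t:ℂ)) ^ ((a:ℂ) - 1) = ((t ^ (a-1) : ℝ) : ℂ) := by
      rw [Complex.ofReal_cpow h0]; norm_num
    have e2 : ((1 - (t:ℂ))) ^ ((b:ℂ) - 1) = (((1-t) ^ (b-1) : ℝ) : ℂ) := by
      rw [Complex.ofReal_cpow h1]; push_cast; norm_num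
    simp [e1, e2, ← Complex.ofReal_mul]
  rw [hint] at h
  have hG : Complex.Gamma ((a:ℂ) + b) ≠ 0 := by
    rw [← Complex.ofReal_add, Complex.Gamma_ofReal]
    exact_mod_cast (Real.Gamma_pos_of_pos (by positivity)).ne'
  have := h
  rw [← Complex.ofReal_add, Complex.Gamma_ofReal, Complex.Gamma_ofReal, Complex.Gamma_ofReal] at this
  field_simp
  rw [mul_comm]
  exact_mod_cast this.symm

lemma moment_intable {a b : ℝ} (ha : 0 < a) (hb : 0 < b) (m : ℕ) :
    IntervalIntegrable (fun t : ℝ => t ^ (a - 1) * (1 - t) ^ (b - 1) * t ^ m) volume 0 1 := by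
  rw [intervalIntegrable_iff_integrableOn_Ioc_of_le (by norm_num)]
  have h := beta_intable (a := a + m) (b := b) (by positivity) hb
  rw [intervalIntegrable_iff_integrableOn_Ioc_of_le (by norm_num)] at h
  refine MeasureTheory.IntegrableOn.congr_fun h ?_ measurableSet_Ioc
  intro t ht
  have ht0 : (0:ℝ) < t := ht.1
  simp only
  rw [show a + (m:ℝ) - 1 = (a - 1) + (m:ℝ) by ring, Real.rpow_add ht0,
    Real.rpow_natCast]
  ring

lemma moment_eq {a b : ℝ} (ha : 0 < a) (hb : 0 < b) (m : ℕ) :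
    (∫ t in (0:ℝ)..1, t ^ (a - 1) * (1 - t) ^ (b - 1) * t ^ m) = betaFn (a + m) b := by
  rw [betaFn]
  rw [intervalIntegral.integral_of_le (by norm_num), intervalIntegral.integral_of_le (by norm_num)]
  apply MeasureTheory.setIntegral_congr_fun measurableSet_Ioc
  intro t ht
  have ht0 : (0:ℝ) < t := ht.1
  simp only
  rw [show a + (m:ℝ) - 1 = (a - 1) + (m:ℝ) by ring, Real.rpow_add ht0, Real.rpow_natCast]
  ring

lemma betaFn_pos {a b : ℝ} (ha : 0 < a) (hb : 0 < b) : 0 < betaFn a b := by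
  rw [betaFn_eq_Gamma ha hb]
  have := Real.Gamma_pos_of_pos ha
  have := Real.Gamma_pos_of_pos hb
  have := Real.Gamma_pos_of_pos (by positivity : (0:ℝ) < a + b)
  positivity

lemma betaFn_ratio {a b : ℝ} (ha : 0 < a) (hb : 0 < b) (m : ℕ) :
    (betaFn a b)⁻¹ * betaFn (a + m) b =
      (ascPochhammer ℝ m).eval a / (ascPochhammer ℝ m).eval (a + b) := by
  rw [betaFn_eq_Gamma ha hb, betaFn_eq_Gamma (by positivity) hb,
    show a + (m:ℝ) + b = (a + b) + m by ring, Gamma_add_nat ha, Gamma_add_nat (by positivity)]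
  have g1 := (Real.Gamma_pos_of_pos ha).ne'
  have g2 := (Real.Gamma_pos_of_pos hb).ne'
  have g3 := (Real.Gamma_pos_of_pos (by positivity : (0:ℝ) < a + b)).ne'
  have p2 := (ascPochhammer_pos m (a+b) (by positivity)).ne'
  field_simp

noncomputable def Mpoly (a : ℝ) (m : ℕ) : Polynomial ℝ :=
  Polynomial.C (((ascPochhammer ℝ m).eval a)⁻¹) *
    (ascPochhammer ℝ m).comp (Polynomial.C a * Polynomial.X)

noncomputable def Tmap (a : ℝ) (p : Polynomial ℝ) : Polynomial ℝ :=
  p.sum fun m c => Polynomial.C c * Mpoly a m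

lemma Mpoly_eval (a : ℝ) (m : ℕ) (x : ℝ) :
    (Mpoly a m).eval x = (ascPochhammer ℝ m).eval (a * x) / (ascPochhammer ℝ m).eval a := by
  simp [Mpoly, Polynomial.eval_comp, div_eq_inv_mul]

lemma Tmap_eval (a : ℝ) (p : Polynomial ℝ) (x : ℝ) :
    (Tmap a p).eval x =
      ∑ m ∈ Finset.range (p.natDegree + 1), p.coeff m * (Mpoly a m).eval x := by
  have h := Polynomial.sum_over_range' (p := p)
    (f := fun m c => Polynomial.C c * Mpoly a m) (by simp) (p.natDegree + 1) (lt_add_one _)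
  rw [Tmap, h]
  simp [Polynomial.eval_finset_sum]

lemma lemmaA {a : ℝ} (ha : 0 < a) {x : ℝ} (hx : x ∈ Set.Ioo (0:ℝ) 1) (p : Polynomial ℝ) :
    (betaFn (a * x) (a * (1 - x)))⁻¹ *
      ∫ t in (0:ℝ)..1, t ^ (a * x - 1) * (1 - t) ^ (a * (1 - x) - 1) * p.eval t =
    (Tmap a p).eval x := by
  obtain ⟨hx0, hx1⟩ := hx
  set s := a * x with hs_def
  set b := a * (1 - x) with hb_def
  have hs : 0 < s := by positivity
  have hb : 0 < b := by
    have h1 : (0:ℝ) < 1 - x := by linarith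
    positivity
  have hsb : s + b = a := by rw [hs_def, hb_def]; ring
  have hI : (∫ t in (0:ℝ)..1, t ^ (s - 1) * (1 - t) ^ (b - 1) * p.eval t) =
      ∑ m ∈ Finset.range (p.natDegree + 1), p.coeff m * betaFn (s + m) b := by
    have hfun : ∀ t : ℝ, t ^ (s - 1) * (1 - t) ^ (b - 1) * p.eval t =
        ∑ m ∈ Finset.range (p.natDegree + 1),
          p.coeff m * (t ^ (s - 1) * (1 - t) ^ (b - 1) * t ^ m) := by
      intro t
      rw [Polynomial.eval_eq_sum_range, Finset.mul_sum]
      exact Finset.sum_congr rfl fun m _ => by ring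
    simp_rw [hfun]
    rw [intervalIntegral.integral_finset_sum]
    · refine Finset.sum_congr rfl fun m _ => ?_
      rw [intervalIntegral.integral_const_mul, moment_eq hs hb]
    · intro m _
      exact (moment_intable hs hb m).const_mul _
  rw [hI, Finset.mul_sum, Tmap_eval]
  refine Finset.sum_congr rfl fun m _ => ?_
  rw [Mpoly_eval, show a * x = s from rfl, ← hsb]
  rw [show (betaFn s b)⁻¹ * (p.coeff m * betaFn (s + m) b)
      = p.coeff m * ((betaFn s b)⁻¹ * betaFn (s + m) b) by ring, betaFn_ratio hs hb]

lemma Tmap_add (a : ℝ) (p q : Polynomial ℝ) :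
    Tmap a (p + q) = Tmap a p + Tmap a q := by
  unfold Tmap
  apply Polynomial.sum_add_index <;> intros <;> simp [add_mul]

lemma Tmap_X_pow (a : ℝ) (m : ℕ) : Tmap a (Polynomial.X ^ m) = Mpoly a m := by
  unfold Tmap
  rw [Polynomial.X_pow_eq_monomial, Polynomial.sum_monomial_index _ _ (by simp)]
  simp

lemma Mpoly_natDegree_le (a : ℝ) (m : ℕ) : (Mpoly a m).natDegree ≤ m := by
  refine (Polynomial.natDegree_C_mul_le _ _).trans ?_
  refine (Polynomial.natDegree_comp_le).trans ?_
  have h1 : (Polynomial.C a * Polynomial.X : Polynomial ℝ).natDegree ≤ 1 :=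
    (Polynomial.natDegree_C_mul_le _ _).trans (by simp)
  calc (ascPochhammer ℝ m).natDegree * (Polynomial.C a * Polynomial.X).natDegree
      ≤ (ascPochhammer ℝ m).natDegree * 1 := Nat.mul_le_mul_left _ h1
    _ = m := by rw [mul_one, ascPochhammer_natDegree]

lemma Tmap_natDegree_le (a : ℝ) (p : Polynomial ℝ) :
    (Tmap a p).natDegree ≤ p.natDegree := by
  rw [Tmap, Polynomial.sum_def]
  apply Polynomial.natDegree_sum_le_of_forall_le
  intro m hm
  refine (Polynomial.natDegree_C_mul_le _ _).trans ?_
  exact (Mpoly_natDegree_le a m).trans (Polynomial.le_natDegree_of_mem_supp m hm)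

lemma Mpoly_coeff_top {a : ℝ} (ha : a ≠ 0) (m : ℕ) :
    (Mpoly a m).coeff m = ((ascPochhammer ℝ m).eval a)⁻¹ * a ^ m := by
  rw [Mpoly, Polynomial.coeff_C_mul]
  congr 1
  have h1 : (Polynomial.C a * Polynomial.X : Polynomial ℝ).natDegree = 1 :=
    Polynomial.natDegree_C_mul_X a ha
  have hd : ((ascPochhammer ℝ m).comp (Polynomial.C a * Polynomial.X)).natDegree = m := by
    rw [Polynomial.natDegree_comp, h1, mul_one, ascPochhammer_natDegree]
  rw [show ((ascPochhammer ℝ m).comp (Polynomial.C a * Polynomial.X)).coeff m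
      = ((ascPochhammer ℝ m).comp (Polynomial.C a * Polynomial.X)).leadingCoeff by
    rw [Polynomial.leadingCoeff, hd]]
  rw [Polynomial.leadingCoeff_comp (by rw [h1]; exact one_ne_zero)]
  have hlc : (Polynomial.C a * Polynomial.X : Polynomial ℝ).leadingCoeff = a := by
    simp [Polynomial.leadingCoeff_mul]
  rw [hlc, (monic_ascPochhammer ℝ m).leadingCoeff, ascPochhammer_natDegree, one_mul]

lemma Tmap_eval_zero (a : ℝ) (p : Polynomial ℝ) : (Tmap a p).eval 0 = p.eval 0 := by
  rw [Tmap_eval]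
  rw [Finset.sum_eq_single 0]
  · simp [Mpoly_eval, Polynomial.coeff_zero_eq_eval_zero]
  · intro m _ hm
    simp [Mpoly_eval, ascPochhammer_eval_zero, hm]
  · intro h
    exact absurd (Finset.mem_range.2 (Nat.succ_pos _)) h

lemma Tmap_eval_one {a : ℝ} (ha : 0 < a) (p : Polynomial ℝ) :
    (Tmap a p).eval 1 = p.eval 1 := by
  rw [Tmap_eval, Polynomial.eval_eq_sum_range]
  refine Finset.sum_congr rfl fun m _ => ?_
  rw [Mpoly_eval, mul_one, div_self (ascPochhammer_pos m a ha).ne', one_pow]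


/-- The Lupaş–Mühlbach Beta operator of order `nρ` maps
`u_{n+1}^ρ = e_{n+1} − L_n^ρ e_{n+1}` to
`((nρ)^{n+1}/(nρ)^{rising (n+1)}) · x(x−1)(x−1/n)⋯(x−(n−1)/n)`. -/
theorem beta_of_u (n : ℕ) (hn : 1 ≤ n) (ρ : ℝ) (hρ : 0 < ρ)
    (L : Polynomial ℝ) (hLdeg : L.natDegree ≤ n)
    (hL : ∀ k ≤ n, Ffun n k ρ (fun x => L.eval x) = Ffun n k ρ (fun x => x ^ (n + 1))) :
    ∀ x ∈ Set.Ioo (0 : ℝ) 1,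
      (betaFn ((n : ℝ) * ρ * x) ((n : ℝ) * ρ * (1 - x)))⁻¹ *
        ∫ t in (0:ℝ)..1,
          t ^ ((n : ℝ) * ρ * x - 1) * (1 - t) ^ ((n : ℝ) * ρ * (1 - x) - 1) *
            (t ^ (n + 1) - L.eval t) =
      (((n : ℝ) * ρ) ^ (n + 1) / (ascPochhammer ℝ (n + 1)).eval ((n : ℝ) * ρ)) *
        ∏ k ∈ Finset.range (n + 1), (x - (k : ℝ) / (n : ℝ)) := by
  intro x hx
  have hnR : (0:ℝ) < n := by exact_mod_cast hn
  have hn0 : (n:ℝ) ≠ 0 := hnR.ne'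
  set a : ℝ := (n:ℝ) * ρ with ha_def
  have ha : 0 < a := by positivity
  set P : Polynomial ℝ := Polynomial.X ^ (n+1) - L with hP_def
  have hTP : Tmap a P = Mpoly a (n+1) - Tmap a L := by
    have h1 : P + L = Polynomial.X ^ (n+1) := sub_add_cancel _ _
    have h2 := Tmap_add a P L
    rw [h1, Tmap_X_pow] at h2
    exact eq_sub_of_add_eq h2.symm
  set R : Polynomial ℝ := Polynomial.C (a^(n+1) / (ascPochhammer ℝ (n+1)).eval a) *
    ∏ k ∈ Finset.range (n+1), (Polynomial.X - Polynomial.C ((k:ℝ)/(n:ℝ))) with hR_def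
  have hprodmonic : (∏ k ∈ Finset.range (n+1),
      (Polynomial.X - Polynomial.C ((k:ℝ)/(n:ℝ)))).Monic :=
    Polynomial.monic_prod_of_monic _ _ (fun i _ => Polynomial.monic_X_sub_C _)
  have hproddeg : (∏ k ∈ Finset.range (n+1),
      (Polynomial.X - Polynomial.C ((k:ℝ)/(n:ℝ)))).natDegree = n+1 := by
    rw [Polynomial.natDegree_prod _ _ (fun i _ => Polynomial.X_sub_C_ne_zero _)]
    simp [Polynomial.natDegree_X_sub_C]
  have key : Tmap a P = R := by
    set D := Tmap a P - R with hD
    have hRdeg : R.natDegree ≤ n+1 := (Polynomial.natDegree_C_mul_le _ _).trans hproddeg.le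
    have hRcoeff : R.coeff (n+1) = a^(n+1) / (ascPochhammer ℝ (n+1)).eval a := by
      rw [hR_def, Polynomial.coeff_C_mul]
      have : (∏ k ∈ Finset.range (n+1),
          (Polynomial.X - Polynomial.C ((k:ℝ)/(n:ℝ)))).coeff (n+1) = 1 := by
        have := hprodmonic.coeff_natDegree
        rwa [hproddeg] at this
      rw [this, mul_one]
    have hTPdeg : (Tmap a P).natDegree ≤ n+1 := by
      refine (Tmap_natDegree_le a P).trans ?_
      refine (Polynomial.natDegree_sub_le _ _).trans ?_
      simp only [Polynomial.natDegree_X_pow]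
      exact max_le le_rfl (hLdeg.trans (Nat.le_succ n))
    have hTPcoeff : (Tmap a P).coeff (n+1)
        = ((ascPochhammer ℝ (n+1)).eval a)⁻¹ * a^(n+1) := by
      rw [hTP, Polynomial.coeff_sub, Mpoly_coeff_top ha.ne' (n+1),
        Polynomial.coeff_eq_zero_of_natDegree_lt
          (lt_of_le_of_lt ((Tmap_natDegree_le a L).trans hLdeg) (Nat.lt_succ_self n)),
        sub_zero]
    have hDdeg : D.natDegree ≤ n := by
      rw [Polynomial.natDegree_le_iff_coeff_eq_zero]
      intro N hN
      rcases eq_or_lt_of_le (Nat.succ_le_of_lt hN) with h | h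
      · rw [hD, Polynomial.coeff_sub, ← h, hTPcoeff, hRcoeff, div_eq_mul_inv]
        ring
      · rw [hD, Polynomial.coeff_sub,
          Polynomial.coeff_eq_zero_of_natDegree_lt (hTPdeg.trans_lt h),
          Polynomial.coeff_eq_zero_of_natDegree_lt (hRdeg.trans_lt h), sub_zero]
    have hL0 : L.eval 0 = 0 := by
      have h := hL 0 (Nat.zero_le n)
      simp [Ffun] at h
      exact h
    have hL1 : L.eval 1 = 1 := by
      have h := hL n le_rfl
      have hne : n ≠ 0 := by omega
      simp [Ffun, hne] at h
      exact h
    have heval : ∀ k ∈ Finset.range (n+1), D.eval ((k:ℝ)/(n:ℝ)) = 0 := by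
      intro k hk
      rw [Finset.mem_range, Nat.lt_succ_iff] at hk
      have hReval : R.eval ((k:ℝ)/(n:ℝ)) = 0 := by
        rw [hR_def, Polynomial.eval_mul, Polynomial.eval_prod,
          Finset.prod_eq_zero (Finset.mem_range.2 (Nat.lt_succ_of_le hk)) (by simp), mul_zero]
      rw [hD, Polynomial.eval_sub, hReval, sub_zero]
      rcases Nat.eq_zero_or_pos k with rfl | hk0
      · simp only [Nat.cast_zero, zero_div]
        rw [Tmap_eval_zero]
        simp [hP_def, hL0]
      rcases eq_or_lt_of_le hk with heq | hkn
      · rw [heq, div_self hn0, Tmap_eval_one ha]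
        simp [hP_def, hL1]
      · have hxk : ((k:ℝ)/(n:ℝ)) ∈ Set.Ioo (0:ℝ) 1 :=
          ⟨by positivity, by rw [div_lt_one hnR]; exact_mod_cast hkn⟩
        have hax : a * ((k:ℝ)/(n:ℝ)) = (k:ℝ) * ρ := by
          rw [ha_def]; field_simp
        have hbx : a * (1 - (k:ℝ)/(n:ℝ)) = ((n:ℝ) - (k:ℝ)) * ρ := by
          rw [ha_def]; field_simp
        have hA1 := lemmaA ha hxk (Polynomial.X ^ (n+1))
        have hA2 := lemmaA ha hxk L
        rw [hax, hbx] at hA1 hA2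
        simp only [Polynomial.eval_pow, Polynomial.eval_X] at hA1
        have hk0' : k ≠ 0 := hk0.ne'
        have hkn' : k ≠ n := hkn.ne
        have hF := hL k hk
        rw [Ffun, if_neg hk0', if_neg hkn', Ffun, if_neg hk0', if_neg hkn'] at hF
        have hsub : (Tmap a P).eval ((k:ℝ)/(n:ℝ))
            = (Tmap a (Polynomial.X ^ (n+1))).eval ((k:ℝ)/(n:ℝ))
              - (Tmap a L).eval ((k:ℝ)/(n:ℝ)) := by
          rw [hTP, ← Tmap_X_pow a (n+1), Polynomial.eval_sub]
        rw [hsub, ← hA1, ← hA2, ← hF, sub_self]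
    have hDzero : D = 0 := by
      have hinj : Function.Injective (fun k : ℕ => (k:ℝ)/(n:ℝ)) := by
        intro i j h
        field_simp at h
        exact_mod_cast h
      apply Polynomial.eq_zero_of_natDegree_lt_card_of_eval_eq_zero' D
        ((Finset.range (n+1)).image (fun k : ℕ => (k:ℝ)/(n:ℝ)))
      · intro i hi
        obtain ⟨k, hk, rfl⟩ := Finset.mem_image.1 hi
        exact heval k hk
      · refine lt_of_le_of_lt hDdeg ?_
        rw [Finset.card_image_of_injective _ hinj, Finset.card_range]
        exact Nat.lt_succ_self n
    exact sub_eq_zero.1 hDzero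
  have hfinal := lemmaA ha hx P
  simp only [hP_def, Polynomial.eval_sub, Polynomial.eval_pow, Polynomial.eval_X] at hfinal
  rw [hfinal, key, hR_def]
  rw [Polynomial.eval_mul, Polynomial.eval_C, Polynomial.eval_prod]
  congr 1
  refine Finset.prod_congr rfl fun k _ => ?_
  simp
end

section
/- Let n ≥ 2 and let J be a monic polynomial of degree n−1 satisfying ∫₀¹ t(1−t) J(t) q(t) dt = 0 for every polynomial q of degree at most n−2 (i.e. J is the monic Jacobi polynomial of degree n−1 orthogonal on [0,1] with respect to the weight t(1−t)). Set u(t) = t(t−1)J(t). Then F_{n,k}^1(u) = 0 for all k = 0,1,…,n; consequently L_n^1 u = 0 and u = e_{n+1} − L_n^1 e_{n+1}, where e_{n+1}(x) = x^{n+1}. -/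
open MeasureTheory

-- bridge lemma
lemma Ffun_poly_mid (n k : ℕ) (hk1 : 1 ≤ k) (hk2 : k ≤ n - 1) (hn : 2 ≤ n) (P : Polynomial ℝ) :
    Ffun n k 1 (fun t => P.eval t) =
      (betaFn ((k:ℝ)*1) (((n:ℝ)-(k:ℝ))*1))⁻¹ *
        ∫ t in (0:ℝ)..1, (Polynomial.X^(k-1) * (1 - Polynomial.X)^(n-1-k) * P).eval t := by
  have hk0 : k ≠ 0 := by omega
  have hkn : k ≠ n := by omega
  have e1 : (k:ℝ) * 1 - 1 = ((k-1:ℕ):ℝ) := by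
    rw [Nat.cast_sub hk1]; push_cast; ring
  have e2 : ((n:ℝ) - (k:ℝ)) * 1 - 1 = ((n-1-k:ℕ):ℝ) := by
    have h : n - 1 - k = n - (k + 1) := by omega
    rw [h, Nat.cast_sub (by omega : k + 1 ≤ n)]; push_cast; ring
  unfold Ffun
  rw [if_neg hk0, if_neg hkn]
  congr 1
  apply intervalIntegral.integral_congr
  intro t _
  simp only [e1, e2, Real.rpow_natCast, Polynomial.eval_mul, Polynomial.eval_pow,
    Polynomial.eval_sub, Polynomial.eval_one, Polynomial.eval_X]

lemma betaFn_pos' (n k : ℕ) (hk1 : 1 ≤ k) (hk2 : k ≤ n - 1) (hn : 2 ≤ n) :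
    0 < betaFn ((k:ℝ)*1) (((n:ℝ)-(k:ℝ))*1) := by
  have e1 : (k:ℝ) * 1 - 1 = ((k-1:ℕ):ℝ) := by
    rw [Nat.cast_sub hk1]; push_cast; ring
  have e2 : ((n:ℝ) - (k:ℝ)) * 1 - 1 = ((n-1-k:ℕ):ℝ) := by
    have h : n - 1 - k = n - (k + 1) := by omega
    rw [h, Nat.cast_sub (by omega : k + 1 ≤ n)]; push_cast; ring
  unfold betaFn
  have heq : ∀ t : ℝ, t ^ ((k:ℝ)*1 - 1) * (1 - t) ^ (((n:ℝ)-(k:ℝ))*1 - 1)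
      = t ^ (k-1:ℕ) * (1 - t) ^ (n-1-k:ℕ) := by
    intro t; rw [e1, e2, Real.rpow_natCast, Real.rpow_natCast]
  rw [intervalIntegral.integral_congr (g := fun t => t ^ (k-1:ℕ) * (1 - t) ^ (n-1-k:ℕ))
    (fun t _ => heq t)]
  apply intervalIntegral.intervalIntegral_pos_of_pos_on
  · exact (((continuous_pow _).comp continuous_id).mul
      ((continuous_const.sub continuous_id).pow _)).intervalIntegrable 0 1
  · intro x hx
    exact mul_pos (pow_pos hx.1 _) (pow_pos (by linarith [hx.2]) _)
  · norm_num

lemma key_unique (n : ℕ) (hn : 2 ≤ n) (L : Polynomial ℝ) (hdegL : L.natDegree ≤ n)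
    (h0 : L.eval 0 = 0) (h1 : L.eval 1 = 0)
    (hint : ∀ k, 1 ≤ k → k ≤ n - 1 →
      ∫ t in (0:ℝ)..1, (Polynomial.X^(k-1) * (1 - Polynomial.X)^(n-1-k) * L).eval t = 0) :
    L = 0 := by
  -- factor out X and (X - 1)
  obtain ⟨L1, hL1⟩ : Polynomial.X ∣ L := by
    rw [Polynomial.X_dvd_iff, Polynomial.coeff_zero_eq_eval_zero]; exact h0
  have hL1root : L1.eval 1 = 0 := by
    have := h1; rw [hL1] at this; simpa using this
  obtain ⟨M, hM⟩ : (Polynomial.X - Polynomial.C 1) ∣ L1 :=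
    Polynomial.dvd_iff_isRoot.mpr hL1root
  have hLfac : L = Polynomial.X * (Polynomial.X - Polynomial.C 1) * M := by
    rw [hL1, hM]; ring
  rcases eq_or_ne M 0 with hM0 | hM0
  · rw [hLfac, hM0, mul_zero]
  exfalso
  -- degree of M
  have hQmonic : (Polynomial.X * (Polynomial.X - Polynomial.C 1) : Polynomial ℝ).Monic :=
    Polynomial.monic_X.mul (Polynomial.monic_X_sub_C 1)
  have hQdeg : (Polynomial.X * (Polynomial.X - Polynomial.C 1) : Polynomial ℝ).natDegree = 2 := by
    rw [Polynomial.natDegree_mul Polynomial.X_ne_zero (Polynomial.X_sub_C_ne_zero 1),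
      Polynomial.natDegree_X, Polynomial.natDegree_X_sub_C]
  have hMdeg : M.natDegree ≤ n - 2 := by
    have : L.natDegree = 2 + M.natDegree := by
      rw [hLfac, Polynomial.natDegree_mul (hQmonic.ne_zero) hM0, hQdeg]
    omega
  have hMcont : Continuous fun t : ℝ => M.eval t := M.continuous
  -- the basic vanishing integrals
  have hk : ∀ k, 1 ≤ k → k ≤ n - 1 →
      ∫ t in (0:ℝ)..1, t^k * (1-t)^(n-k) * M.eval t = 0 := by
    intro k hk1 hk2
    have h := hint k hk1 hk2
    have heq : ∀ t : ℝ, (Polynomial.X^(k-1) * (1 - Polynomial.X)^(n-1-k) * L).eval t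
        = -(t^k * (1-t)^(n-k) * M.eval t) := by
      intro t
      rw [hLfac]
      simp only [Polynomial.eval_mul, Polynomial.eval_pow, Polynomial.eval_sub,
        Polynomial.eval_one, Polynomial.eval_X, Polynomial.eval_C]
      have e1 : t^(k-1) * t = t^k := by
        rw [← pow_succ]; congr 1; omega
      have e2 : (1-t)^(n-1-k) * (1-t) = (1-t)^(n-k) := by
        rw [← pow_succ]; congr 1; omega
      calc t ^ (k - 1) * (1 - t) ^ (n - 1 - k) * (t * (t - 1) * M.eval t)
          = -((t^(k-1) * t) * ((1-t)^(n-1-k) * (1-t)) * M.eval t) := by ring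
        _ = -(t^k * (1-t)^(n-k) * M.eval t) := by rw [e1, e2]
    rw [intervalIntegral.integral_congr (g := fun t => -(t^k * (1-t)^(n-k) * M.eval t))
      (fun t _ => heq t), intervalIntegral.integral_neg, neg_eq_zero] at h
    exact h
  -- monomial vanishing
  have hmono : ∀ j, j ≤ n - 2 →
      ∫ t in (0:ℝ)..1, t * (1-t) * t^j * M.eval t = 0 := by
    intro j hj
    set m := n - 2 - j with hm
    have heq : ∀ t : ℝ, t * (1-t) * t^j * M.eval t
        = ∑ i ∈ Finset.range (m+1), (m.choose i : ℝ) *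
            (t^(j+i+1) * (1-t)^(n-(j+i+1)) * M.eval t) := by
      intro t
      have hone : (1:ℝ) = (t + (1-t)) ^ m := by norm_num
      calc t * (1-t) * t^j * M.eval t
          = (t * (1-t) * t^j * M.eval t) * ((t + (1-t)) ^ m) := by rw [← hone]; ring
        _ = (t * (1-t) * t^j * M.eval t) *
            ∑ i ∈ Finset.range (m+1), t^i * (1-t)^(m-i) * (m.choose i : ℝ) := by
            rw [add_pow]
        _ = ∑ i ∈ Finset.range (m+1), (t * (1-t) * t^j * M.eval t) *
            (t^i * (1-t)^(m-i) * (m.choose i : ℝ)) := by rw [Finset.mul_sum]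
        _ = _ := by
            apply Finset.sum_congr rfl
            intro i hi
            have hi' : i ≤ m := by
              have := Finset.mem_range.mp hi; omega
            have e1 : t^(j+i+1) = t * t^j * t^i := by
              rw [show j+i+1 = 1+j+i by omega, pow_add, pow_add, pow_one]
            have e2 : (1-t)^(n-(j+i+1)) = (1-t) * (1-t)^(m-i) := by
              rw [show n-(j+i+1) = 1+(m-i) by omega, pow_add, pow_one]
            rw [e1, e2]; ring
    rw [intervalIntegral.integral_congr (g := fun t => ∑ i ∈ Finset.range (m+1),
      (m.choose i : ℝ) * (t^(j+i+1) * (1-t)^(n-(j+i+1)) * M.eval t)) (fun t _ => heq t)]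
    rw [intervalIntegral.integral_finset_sum]
    · apply Finset.sum_eq_zero
      intro i hi
      have hi' : i ≤ m := by have := Finset.mem_range.mp hi; omega
      rw [intervalIntegral.integral_const_mul, hk (j+i+1) (by omega) (by omega), mul_zero]
    · intro i _
      exact (continuous_const.mul (((continuous_pow _).mul
        ((continuous_const.sub continuous_id).pow _)).mul hMcont)).intervalIntegrable 0 1
  -- integral of t(1-t)M² vanishes
  have hM2 : ∫ t in (0:ℝ)..1, t * (1-t) * (M.eval t)^2 = 0 := by
    set d := M.natDegree with hd
    have heq : ∀ t : ℝ, t * (1-t) * (M.eval t)^2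
        = ∑ j ∈ Finset.range (d+1), M.coeff j * (t * (1-t) * t^j * M.eval t) := by
      intro t
      calc t * (1-t) * (M.eval t)^2
          = (t * (1-t) * M.eval t) * M.eval t := by ring
        _ = (t * (1-t) * M.eval t) * ∑ j ∈ Finset.range (d+1), M.coeff j * t^j := by
            rw [← Polynomial.eval_eq_sum_range]
        _ = _ := by
            rw [Finset.mul_sum]; apply Finset.sum_congr rfl; intro j _; ring
    rw [intervalIntegral.integral_congr (g := fun t => ∑ j ∈ Finset.range (d+1),
      M.coeff j * (t * (1-t) * t^j * M.eval t)) (fun t _ => heq t)]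
    rw [intervalIntegral.integral_finset_sum]
    · apply Finset.sum_eq_zero
      intro j hj
      have hj' : j ≤ n - 2 := by
        have := Finset.mem_range.mp hj; omega
      rw [intervalIntegral.integral_const_mul, hmono j hj', mul_zero]
    · intro j _
      exact (continuous_const.mul (((continuous_id.mul
        (continuous_const.sub continuous_id)).mul (continuous_pow _)).mul
        hMcont)).intervalIntegrable 0 1
  -- derive contradiction
  set P : Polynomial ℝ := Polynomial.X * (1 - Polynomial.X) * M^2 with hP
  have hPne : P ≠ 0 := by
    apply mul_ne_zero (mul_ne_zero Polynomial.X_ne_zero ?_) (pow_ne_zero _ hM0)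
    intro h
    have := congrArg (Polynomial.eval 0) h
    simp at this
  have hPeval : ∀ t : ℝ, P.eval t = t * (1-t) * (M.eval t)^2 := by
    intro t; simp [hP]
  have hPcont : Continuous fun t : ℝ => P.eval t := P.continuous
  have hnn : (0:ℝ → ℝ) ≤ᵐ[volume.restrict (Set.Ioc (0:ℝ) 1)] fun t => P.eval t := by
    rw [Filter.EventuallyLE, ae_restrict_iff' measurableSet_Ioc]
    refine Filter.Eventually.of_forall (fun t ht => ?_)
    simp only [Pi.zero_apply]
    rw [hPeval]
    have h3 : (0:ℝ) ≤ 1 - t := by linarith [ht.2]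
    exact mul_nonneg (mul_nonneg ht.1.le h3) (sq_nonneg _)
  have hInt : IntervalIntegrable (fun t => P.eval t) volume 0 1 :=
    hPcont.intervalIntegrable 0 1
  have hzero : (fun t => P.eval t) =ᵐ[volume.restrict (Set.Ioc (0:ℝ) 1)] 0 := by
    rw [← intervalIntegral.integral_eq_zero_iff_of_le_of_nonneg_ae (by norm_num) hnn hInt]
    rw [intervalIntegral.integral_congr (g := fun t => t * (1-t) * (M.eval t)^2)
      (fun t _ => hPeval t)]
    exact hM2
  have hae : ∀ᵐ t ∂(volume : Measure ℝ), t ∈ Set.Ioc (0:ℝ) 1 → P.eval t = 0 := by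
    rw [← ae_restrict_iff' measurableSet_Ioc]
    exact hzero
  have hnull : volume {t : ℝ | ¬ (t ∈ Set.Ioc (0:ℝ) 1 → P.eval t = 0)} = 0 :=
    MeasureTheory.ae_iff.mp hae
  have hfin : ({x : ℝ | P.IsRoot x}).Finite := Polynomial.finite_setOf_isRoot hPne
  have hsub : Set.Ioc (0:ℝ) 1 \ {x : ℝ | P.IsRoot x} ⊆
      {t : ℝ | ¬ (t ∈ Set.Ioc (0:ℝ) 1 → P.eval t = 0)} := by
    intro t ⟨htI, htR⟩
    intro h
    exact htR (h htI)
  have h1' : volume (Set.Ioc (0:ℝ) 1 \ {x : ℝ | P.IsRoot x}) = 0 :=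
    measure_mono_null hsub hnull
  have h2' : volume (Set.Ioc (0:ℝ) 1 \ {x : ℝ | P.IsRoot x}) = volume (Set.Ioc (0:ℝ) 1) :=
    measure_diff_null (hfin.measure_zero _)
  rw [h1', Real.volume_Ioc] at h2'
  norm_num at h2'

lemma Ffun_zero' (n : ℕ) (ρ : ℝ) (f : ℝ → ℝ) : Ffun n 0 ρ f = f 0 := by
  unfold Ffun; simp

lemma Ffun_last (n : ℕ) (hn : n ≠ 0) (ρ : ℝ) (f : ℝ → ℝ) : Ffun n n ρ f = f 1 := by
  unfold Ffun; rw [if_neg hn, if_pos rfl]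

lemma Ffun_poly_sub (n k : ℕ) (hn : 2 ≤ n) (hk : k ≤ n) (P Q : Polynomial ℝ) :
    Ffun n k 1 (fun t => (P - Q).eval t) =
      Ffun n k 1 (fun t => P.eval t) - Ffun n k 1 (fun t => Q.eval t) := by
  rcases eq_or_ne k 0 with h | h
  · subst h; rw [Ffun_zero', Ffun_zero', Ffun_zero']; simp
  rcases eq_or_ne k n with h' | h'
  · subst h'; rw [Ffun_last _ (by omega), Ffun_last _ (by omega), Ffun_last _ (by omega)]; simp
  have hk1 : 1 ≤ k := by omega
  have hk2 : k ≤ n - 1 := by omega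
  rw [Ffun_poly_mid n k hk1 hk2 hn, Ffun_poly_mid n k hk1 hk2 hn,
    Ffun_poly_mid n k hk1 hk2 hn, ← mul_sub]
  congr 1
  have heq : ∀ t : ℝ, (Polynomial.X^(k-1) * (1 - Polynomial.X)^(n-1-k) * (P - Q)).eval t
      = (Polynomial.X^(k-1) * (1 - Polynomial.X)^(n-1-k) * P).eval t
        - (Polynomial.X^(k-1) * (1 - Polynomial.X)^(n-1-k) * Q).eval t := by
    intro t; simp [mul_sub]
  rw [intervalIntegral.integral_congr (g := fun t =>
      (Polynomial.X^(k-1) * (1 - Polynomial.X)^(n-1-k) * P).eval t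
        - (Polynomial.X^(k-1) * (1 - Polynomial.X)^(n-1-k) * Q).eval t) (fun t _ => heq t)]
  exact intervalIntegral.integral_sub
    ((Polynomial.continuous _).intervalIntegrable 0 1)
    ((Polynomial.continuous _).intervalIntegrable 0 1)


/-- Let `n ≥ 2` and let `J` be the monic Jacobi polynomial of degree `n−1`,
orthogonal on `[0,1]` with respect to the weight `t(1−t)`. Set `u(t) = t(t−1)J(t)`.
Then `F_{n,k}^1(u) = 0` for all `k`, hence `L_n^1 u = 0` and
`u = e_{n+1} − L_n^1 e_{n+1}`. -/
theorem jacobi_u (n : ℕ) (hn : 2 ≤ n)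
    (J : Polynomial ℝ) (hmonic : J.Monic) (hdeg : J.natDegree = n - 1)
    (horth : ∀ q : Polynomial ℝ, q.natDegree ≤ n - 2 →
      ∫ t in (0:ℝ)..1, t * (1 - t) * J.eval t * q.eval t = 0) :
    (∀ k ≤ n, Ffun n k 1
      (fun t => (Polynomial.X * (Polynomial.X - 1) * J).eval t) = 0) ∧
    (∀ L : Polynomial ℝ, L.natDegree ≤ n →
      (∀ k ≤ n, Ffun n k 1 (fun t => L.eval t) =
        Ffun n k 1 (fun t => (Polynomial.X * (Polynomial.X - 1) * J).eval t)) →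
      L = 0) ∧
    (∀ L' : Polynomial ℝ, L'.natDegree ≤ n →
      (∀ k ≤ n, Ffun n k 1 (fun t => L'.eval t) = Ffun n k 1 (fun t => t ^ (n + 1))) →
      Polynomial.X * (Polynomial.X - 1) * J = Polynomial.X ^ (n + 1) - L') := by

  set u : Polynomial ℝ := Polynomial.X * (Polynomial.X - 1) * J with hu_def
  have hC1 : (Polynomial.X - 1 : Polynomial ℝ) = Polynomial.X - Polynomial.C 1 := by
    rw [Polynomial.C_1]
  -- Part 1
  have part1 : ∀ k ≤ n, Ffun n k 1 (fun t => u.eval t) = 0 := by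
    intro k hk
    rcases eq_or_ne k 0 with h | h
    · subst h; rw [Ffun_zero']; simp [hu_def]
    rcases eq_or_ne k n with h' | h'
    · subst h'; rw [Ffun_last _ (by omega)]; simp [hu_def]
    have hk1 : 1 ≤ k := by omega
    have hk2 : k ≤ n - 1 := by omega
    rw [Ffun_poly_mid n k hk1 hk2 hn]
    have hq : (Polynomial.X^(k-1) * (1 - Polynomial.X)^(n-1-k) : Polynomial ℝ).natDegree
        ≤ n - 2 := by
      refine le_trans (Polynomial.natDegree_mul_le) ?_
      have hA : (Polynomial.X^(k-1) : Polynomial ℝ).natDegree = k - 1 :=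
        Polynomial.natDegree_X_pow _
      have hB : ((1 - Polynomial.X : Polynomial ℝ)^(n-1-k)).natDegree ≤ n - 1 - k := by
        refine le_trans (Polynomial.natDegree_pow_le) ?_
        have h1X : (1 - Polynomial.X : Polynomial ℝ).natDegree = 1 := by
          have : (1 - Polynomial.X : Polynomial ℝ) = -(Polynomial.X - Polynomial.C 1) := by
            rw [Polynomial.C_1]; ring
          rw [this, Polynomial.natDegree_neg, Polynomial.natDegree_X_sub_C]
        rw [h1X]; omega
      omega
    have heq : ∀ t : ℝ, (Polynomial.X^(k-1) * (1 - Polynomial.X)^(n-1-k) * u).eval t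
        = -(t * (1 - t) * J.eval t *
            (Polynomial.X^(k-1) * (1 - Polynomial.X)^(n-1-k) : Polynomial ℝ).eval t) := by
      intro t
      simp only [hu_def, Polynomial.eval_mul, Polynomial.eval_pow, Polynomial.eval_sub,
        Polynomial.eval_one, Polynomial.eval_X]
      ring
    rw [intervalIntegral.integral_congr (g := fun t => -(t * (1 - t) * J.eval t *
      (Polynomial.X^(k-1) * (1 - Polynomial.X)^(n-1-k) : Polynomial ℝ).eval t))
      (fun t _ => heq t), intervalIntegral.integral_neg,
      horth _ hq, neg_zero, mul_zero]
  -- Part 2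
  have part2 : ∀ L : Polynomial ℝ, L.natDegree ≤ n →
      (∀ k ≤ n, Ffun n k 1 (fun t => L.eval t) = Ffun n k 1 (fun t => u.eval t)) →
      L = 0 := by
    intro L hdegL hF
    have hF0 : ∀ k ≤ n, Ffun n k 1 (fun t => L.eval t) = 0 :=
      fun k hk => (hF k hk).trans (part1 k hk)
    have h0 : L.eval 0 = 0 := by
      have := hF0 0 (by omega); rwa [Ffun_zero'] at this
    have h1 : L.eval 1 = 0 := by
      have := hF0 n le_rfl; rwa [Ffun_last _ (by omega)] at this
    apply key_unique n hn L hdegL h0 h1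
    intro k hk1 hk2
    have h := hF0 k (by omega)
    rw [Ffun_poly_mid n k hk1 hk2 hn] at h
    have hb := betaFn_pos' n k hk1 hk2 hn
    rcases mul_eq_zero.mp h with h' | h'
    · exact absurd h' (inv_ne_zero hb.ne')
    · exact h'
  refine ⟨part1, part2, ?_⟩
  -- Part 3
  intro L' hdegL' hF'
  have hJne : J ≠ 0 := hmonic.ne_zero
  have humonic : u.Monic := by
    rw [hu_def, hC1]
    exact (Polynomial.monic_X.mul (Polynomial.monic_X_sub_C 1)).mul hmonic
  have hudeg : u.natDegree = n + 1 := by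
    rw [hu_def, hC1, Polynomial.natDegree_mul
      ((Polynomial.monic_X.mul (Polynomial.monic_X_sub_C 1)).ne_zero) hJne,
      Polynomial.natDegree_mul Polynomial.X_ne_zero (Polynomial.X_sub_C_ne_zero 1),
      Polynomial.natDegree_X, Polynomial.natDegree_X_sub_C, hdeg]
    omega
  set D : Polynomial ℝ := (Polynomial.X ^ (n+1) - u) - L' with hD_def
  have hdegXu : (Polynomial.X ^ (n+1) - u : Polynomial ℝ).natDegree ≤ n := by
    rcases eq_or_ne (Polynomial.X ^ (n+1) - u : Polynomial ℝ) 0 with h | h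
    · rw [h]; simp
    have hlt : (Polynomial.X ^ (n+1) - u : Polynomial ℝ).degree < ((n+1 : ℕ) : WithBot ℕ) := by
      have := Polynomial.degree_sub_lt (p := (Polynomial.X ^ (n+1) : Polynomial ℝ)) (q := u)
        (by rw [Polynomial.degree_X_pow, Polynomial.degree_eq_natDegree humonic.ne_zero, hudeg])
        (by exact pow_ne_zero _ Polynomial.X_ne_zero)
        (by rw [Polynomial.leadingCoeff_X_pow, humonic.leadingCoeff])
      rwa [Polynomial.degree_X_pow] at this
    have := (Polynomial.natDegree_lt_iff_degree_lt h).mpr hlt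
    omega
  have hdegD : D.natDegree ≤ n := by
    refine le_trans (Polynomial.natDegree_sub_le _ _) ?_
    exact max_le hdegXu hdegL'
  have hFD : ∀ k ≤ n, Ffun n k 1 (fun t => D.eval t) = Ffun n k 1 (fun t => u.eval t) := by
    intro k hk
    have hpow : (fun t : ℝ => t ^ (n+1)) = fun t => (Polynomial.X ^ (n+1) : Polynomial ℝ).eval t := by
      funext t; simp
    rw [hD_def, Ffun_poly_sub n k hn hk, Ffun_poly_sub n k hn hk, part1 k hk, sub_zero]
    rw [hF' k hk, hpow]
    ring
  have hD0 : D = 0 := part2 D hdegD hFD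
  rw [hD_def] at hD0
  have : Polynomial.X ^ (n+1) - L' = u := by
    have h := sub_eq_zero.mp (by rw [← hD0]; ring_nf : (Polynomial.X ^ (n+1) - L') - u = 0)
    exact h
  rw [← this]
end

section
/- Let n ≥ 1 and ρ > 0. Suppose that for each k = 0,…,n there exist a polynomial q_k of exact degree k and a real number λ_k such that U_n^ρ q_k = λ_k q_k, with 1 = λ₀ = λ₁ ≥ λ₂ ≥ … ≥ λ_n > 0 and λ_k < 1 for k ≥ 2. Then for every f ∈ C[0,1], ⊕^M U_n^ρ f converges uniformly on [0,1], as M → ∞, to L_n^ρ f. -/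
open MeasureTheory

/-- The iterated Boolean sum `⊕^M U_n^ρ = I − (I − U_n^ρ)^M`. -/
noncomputable def boolSum (n : ℕ) (ρ : ℝ) (M : ℕ) (f : ℝ → ℝ) : ℝ → ℝ :=
  fun x => f x - ((fun (g : ℝ → ℝ) (y : ℝ) => g y - Uop n ρ g y)^[M] f) x

lemma weight_intable_one {a b : ℝ} (ha : 0 < a) (hb : 0 < b) :
    IntervalIntegrable (fun t : ℝ => t ^ (a-1) * (1 - t) ^ (b-1)) volume 0 1 := by
  have hc : IntervalIntegrable
      (fun t : ℝ => (t:ℂ) ^ ((a:ℂ)-1) * (1 - (t:ℂ)) ^ ((b:ℂ)-1)) volume 0 1 :=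
    Complex.betaIntegral_convergent (by simpa) (by simpa)
  rw [intervalIntegrable_iff_integrableOn_Ioc_of_le zero_le_one] at hc ⊢
  refine MeasureTheory.IntegrableOn.congr_fun hc.re ?_ measurableSet_Ioc
  intro t ht
  have h1 : (0:ℝ) ≤ t := ht.1.le
  have h2 : (0:ℝ) ≤ 1 - t := by linarith [ht.2]
  
  simp only [RCLike.re_to_complex]
  rw [show ((a:ℂ)-1) = ((a-1:ℝ):ℂ) by push_cast; ring,
    show ((b:ℂ)-1) = ((b-1:ℝ):ℂ) by push_cast; ring,
    show (1 - (t:ℂ)) = ((1-t:ℝ):ℂ) by push_cast; ring,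
    ← Complex.ofReal_cpow h1, ← Complex.ofReal_cpow h2, ← Complex.ofReal_mul,
    Complex.ofReal_re]


lemma weight_intable {a b : ℝ} (ha : 0 < a) (hb : 0 < b) {h : ℝ → ℝ}
    (hh : ContinuousOn h (Set.Icc 0 1)) :
    IntervalIntegrable (fun t : ℝ => t ^ (a-1) * (1 - t) ^ (b-1) * h t) volume 0 1 := by
  obtain ⟨C, hC⟩ := isCompact_Icc.exists_bound_of_continuousOn hh
  have hw := weight_intable_one ha hb
  rw [intervalIntegrable_iff_integrableOn_Ioc_of_le zero_le_one,
    integrableOn_Ioc_iff_integrableOn_Ioo] at hw ⊢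
  have hwc : ContinuousOn (fun t : ℝ => t ^ (a-1) * (1 - t) ^ (b-1)) (Set.Ioo 0 1) := by
    refine (continuousOn_id.rpow_const ?_).mul
      ((continuousOn_const.sub continuousOn_id).rpow_const ?_)
    · exact fun x hx => Or.inl (ne_of_gt hx.1)
    · exact fun x hx => Or.inl (by show (1:ℝ) - x ≠ 0; intro hc; nlinarith [hx.2])
  refine Integrable.mono' (hw.const_mul C) ?_ ?_
  · exact (hwc.mul (hh.mono (Set.Ioo_subset_Icc_self))).aestronglyMeasurable measurableSet_Ioo
  · rw [ae_restrict_iff' measurableSet_Ioo]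
    filter_upwards with t ht
    have h1 : (0:ℝ) ≤ t := le_of_lt ht.1
    have h2 : (0:ℝ) ≤ 1 - t := by linarith [le_of_lt ht.2]
    have hwnn : 0 ≤ t ^ (a-1) * (1 - t) ^ (b-1) :=
      mul_nonneg (Real.rpow_nonneg h1 _) (Real.rpow_nonneg h2 _)
    rw [Real.norm_eq_abs, abs_mul, abs_of_nonneg hwnn]
    calc t ^ (a-1) * (1 - t) ^ (b-1) * |h t| ≤ t ^ (a-1) * (1 - t) ^ (b-1) * C := by
          refine mul_le_mul_of_nonneg_left ?_ hwnn
          simpa using hC t ⟨h1, le_of_lt ht.2⟩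
      _ = C * (t ^ (a-1) * (1 - t) ^ (b-1)) := by ring

section Flems
variable {n k : ℕ} {ρ : ℝ}

lemma apos (hρ : 0 < ρ) (h0 : k ≠ 0) : 0 < (k:ℝ) * ρ := by
  have : 0 < (k:ℝ) := by exact_mod_cast Nat.pos_of_ne_zero h0
  exact mul_pos this hρ

lemma bpos (hρ : 0 < ρ) (hk : k ≤ n) (hkn : k ≠ n) : 0 < ((n:ℝ) - (k:ℝ)) * ρ := by
  have : (k:ℝ) < (n:ℝ) := by exact_mod_cast lt_of_le_of_ne hk hkn
  exact mul_pos (by linarith) hρ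

lemma Ffun_add (hρ : 0 < ρ) (hk : k ≤ n) {u v : ℝ → ℝ}
    (hu : ContinuousOn u (Set.Icc 0 1)) (hv : ContinuousOn v (Set.Icc 0 1)) :
    Ffun n k ρ (fun x => u x + v x) = Ffun n k ρ u + Ffun n k ρ v := by
  unfold Ffun
  by_cases h0 : k = 0
  · simp [h0]
  by_cases hkn : k = n
  · subst hkn; simp [h0]
  simp only [h0, hkn, if_false]
  beta_reduce
  have h1 := weight_intable (apos hρ h0) (bpos hρ hk hkn) hu
  have h2 := weight_intable (apos hρ h0) (bpos hρ hk hkn) hv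
  simp only [mul_add]
  rw [intervalIntegral.integral_add h1 h2]
  ring

lemma Ffun_smul (hρ : 0 < ρ) (hk : k ≤ n) (c : ℝ) {u : ℝ → ℝ}
    (hu : ContinuousOn u (Set.Icc 0 1)) :
    Ffun n k ρ (fun x => c * u x) = c * Ffun n k ρ u := by
  unfold Ffun
  by_cases h0 : k = 0
  · simp [h0]
  by_cases hkn : k = n
  · subst hkn; simp [h0]
  simp only [h0, hkn, if_false]
  beta_reduce
  simp only [show ∀ (w z : ℝ), w * (c * z) = c * (w * z) from fun w z => by ring]
  rw [intervalIntegral.integral_const_mul]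
  ring

lemma Ffun_one (hρ : 0 < ρ) (hk : k ≤ n) : Ffun n k ρ (fun _ => 1) = 1 := by
  unfold Ffun
  by_cases h0 : k = 0
  · simp [h0]
  by_cases hkn : k = n
  · subst hkn; simp [h0]
  simp only [h0, hkn, if_false]
  beta_reduce
  simp only [mul_one]
  show (betaFn ((k : ℝ) * ρ) (((n : ℝ) - (k : ℝ)) * ρ))⁻¹ *
    betaFn ((k : ℝ) * ρ) (((n : ℝ) - (k : ℝ)) * ρ) = 1
  exact inv_mul_cancel₀ (ne_of_gt (betaFn_pos (apos hρ h0) (bpos hρ hk hkn)))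

end Flems

noncomputable def Upoly (n : ℕ) (ρ : ℝ) (p : Polynomial ℝ) : Polynomial ℝ :=
  ∑ k ∈ Finset.range (n + 1),
    Polynomial.C (Ffun n k ρ (fun t => p.eval t)) * bernsteinPolynomial ℝ n k

noncomputable def Tpoly (n : ℕ) (ρ : ℝ) (p : Polynomial ℝ) : Polynomial ℝ :=
  p - Upoly n ρ p

lemma bern_eval (n k : ℕ) (x : ℝ) : (bernsteinPolynomial ℝ n k).eval x = bern n k x := by
  simp [bernsteinPolynomial, bern]

lemma Upoly_eval (n : ℕ) (ρ : ℝ) (p : Polynomial ℝ) (x : ℝ) :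
    (Upoly n ρ p).eval x = Uop n ρ (fun t => p.eval t) x := by
  rw [Upoly, Uop, Polynomial.eval_finset_sum]
  exact Finset.sum_congr rfl fun k _ => by rw [Polynomial.eval_mul, Polynomial.eval_C, bern_eval]

lemma Tpoly_iter_eval (n : ℕ) (ρ : ℝ) (p : Polynomial ℝ) (M : ℕ) :
    (fun (g : ℝ → ℝ) (y : ℝ) => g y - Uop n ρ g y)^[M] (fun t => p.eval t)
      = fun t => (((Tpoly n ρ)^[M]) p).eval t := by
  induction M generalizing p with
  | zero => simp
  | succ M ih =>
    rw [Function.iterate_succ_apply, Function.iterate_succ_apply]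
    have : (fun y => (fun t => p.eval t) y - Uop n ρ (fun t => p.eval t) y)
        = fun t => (Tpoly n ρ p).eval t := by
      funext y
      rw [Tpoly, Polynomial.eval_sub, Upoly_eval]
    rw [this, ih]

lemma Upoly_add (n : ℕ) (ρ : ℝ) (hρ : 0 < ρ) (p r : Polynomial ℝ) :
    Upoly n ρ (p + r) = Upoly n ρ p + Upoly n ρ r := by
  rw [Upoly, Upoly, Upoly, ← Finset.sum_add_distrib]
  refine Finset.sum_congr rfl fun k hk => ?_
  have hkn : k ≤ n := Nat.lt_succ_iff.mp (Finset.mem_range.mp hk)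
  have : (fun t => (p + r).eval t) = fun t => p.eval t + r.eval t := by
    funext t; rw [Polynomial.eval_add]
  rw [this, Ffun_add hρ hkn (Polynomial.continuous p).continuousOn
    (Polynomial.continuous r).continuousOn, Polynomial.C_add]
  ring

lemma Upoly_smul (n : ℕ) (ρ : ℝ) (hρ : 0 < ρ) (c : ℝ) (p : Polynomial ℝ) :
    Upoly n ρ (c • p) = c • Upoly n ρ p := by
  rw [Upoly, Upoly, Finset.smul_sum]
  refine Finset.sum_congr rfl fun k hk => ?_
  have hkn : k ≤ n := Nat.lt_succ_iff.mp (Finset.mem_range.mp hk)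
  have : (fun t => (c • p).eval t) = fun t => c * p.eval t := by
    funext t; rw [Polynomial.eval_smul, smul_eq_mul]
  rw [this, Ffun_smul hρ hkn c (Polynomial.continuous p).continuousOn, Polynomial.C_mul,
    Polynomial.smul_eq_C_mul]
  ring

lemma Tpoly_add (n : ℕ) (ρ : ℝ) (hρ : 0 < ρ) (p r : Polynomial ℝ) :
    Tpoly n ρ (p + r) = Tpoly n ρ p + Tpoly n ρ r := by
  rw [Tpoly, Tpoly, Tpoly, Upoly_add n ρ hρ]; ring

lemma Tpoly_smul (n : ℕ) (ρ : ℝ) (hρ : 0 < ρ) (c : ℝ) (p : Polynomial ℝ) :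
    Tpoly n ρ (c • p) = c • Tpoly n ρ p := by
  rw [Tpoly, Tpoly, Upoly_smul n ρ hρ, smul_sub]

lemma Tpoly_iter_add (n : ℕ) (ρ : ℝ) (hρ : 0 < ρ) (p r : Polynomial ℝ) (M : ℕ) :
    (Tpoly n ρ)^[M] (p + r) = (Tpoly n ρ)^[M] p + (Tpoly n ρ)^[M] r := by
  induction M generalizing p r with
  | zero => simp
  | succ M ih => rw [Function.iterate_succ_apply, Function.iterate_succ_apply,
      Function.iterate_succ_apply, Tpoly_add n ρ hρ, ih]

lemma Tpoly_iter_smul (n : ℕ) (ρ : ℝ) (hρ : 0 < ρ) (c : ℝ) (p : Polynomial ℝ) (M : ℕ) :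
    (Tpoly n ρ)^[M] (c • p) = c • (Tpoly n ρ)^[M] p := by
  induction M generalizing p with
  | zero => simp
  | succ M ih => rw [Function.iterate_succ_apply, Function.iterate_succ_apply,
      Tpoly_smul n ρ hρ, ih]

lemma Upoly_one (n : ℕ) (ρ : ℝ) (hρ : 0 < ρ) : Upoly n ρ 1 = 1 := by
  rw [Upoly]
  have h1 : ∀ k ∈ Finset.range (n+1),
      Polynomial.C (Ffun n k ρ (fun t => (1 : Polynomial ℝ).eval t)) * bernsteinPolynomial ℝ n k
        = bernsteinPolynomial ℝ n k := by
    intro k hk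
    have hkn : k ≤ n := Nat.lt_succ_iff.mp (Finset.mem_range.mp hk)
    have : (fun t => (1 : Polynomial ℝ).eval t) = fun _ : ℝ => (1:ℝ) := by
      funext t; simp
    rw [this, Ffun_one hρ hkn]
    simp
  rw [Finset.sum_congr rfl h1, bernsteinPolynomial.sum]

lemma Uop_add (n : ℕ) (ρ : ℝ) (hρ : 0 < ρ) {u v : ℝ → ℝ}
    (hu : ContinuousOn u (Set.Icc 0 1)) (hv : ContinuousOn v (Set.Icc 0 1)) :
    Uop n ρ (fun x => u x + v x) = fun x => Uop n ρ u x + Uop n ρ v x := by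
  funext x
  rw [Uop, Uop, Uop, ← Finset.sum_add_distrib]
  refine Finset.sum_congr rfl fun k hk => ?_
  rw [Ffun_add hρ (Nat.lt_succ_iff.mp (Finset.mem_range.mp hk)) hu hv]
  ring

lemma Uop_congrF (n : ℕ) (ρ : ℝ) {u v : ℝ → ℝ}
    (h : ∀ k ≤ n, Ffun n k ρ u = Ffun n k ρ v) : Uop n ρ u = Uop n ρ v := by
  funext x
  exact Finset.sum_congr rfl fun k hk => by
    rw [h k (Nat.lt_succ_iff.mp (Finset.mem_range.mp hk))]

lemma Upoly_eig (n : ℕ) (ρ : ℝ) (q : Polynomial ℝ) (lam : ℝ)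
    (heig : ∀ x, Uop n ρ (fun t => q.eval t) x = lam * q.eval x) :
    Upoly n ρ q = lam • q := by
  apply Polynomial.funext
  intro x
  rw [Upoly_eval, heig, Polynomial.eval_smul, smul_eq_mul]

lemma Tpoly_iter_eig (n : ℕ) (ρ : ℝ) (hρ : 0 < ρ) (q : Polynomial ℝ) (lam : ℝ)
    (heig : ∀ x, Uop n ρ (fun t => q.eval t) x = lam * q.eval x) (M : ℕ) :
    (Tpoly n ρ)^[M] q = (1 - lam) ^ M • q := by
  have hT : Tpoly n ρ q = (1 - lam) • q := by
    rw [Tpoly, Upoly_eig n ρ q lam heig, sub_smul, one_smul]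
  induction M with
  | zero => simp
  | succ M ih =>
    rw [Function.iterate_succ_apply, hT, Tpoly_iter_smul n ρ hρ, ih, smul_smul, ← pow_succ']

lemma Tpoly_iter_zero (n : ℕ) (ρ : ℝ) (hρ : 0 < ρ) (M : ℕ) :
    (Tpoly n ρ)^[M] 0 = 0 := by
  have h0 : Tpoly n ρ 0 = 0 := by
    calc Tpoly n ρ 0 = Tpoly n ρ ((0:ℝ) • 1) := by rw [zero_smul]
      _ = (0:ℝ) • Tpoly n ρ 1 := Tpoly_smul n ρ hρ 0 1
      _ = 0 := zero_smul _ _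
  induction M with
  | zero => simp
  | succ M ih => rw [Function.iterate_succ_apply, h0, ih]

lemma Tpoly_iter_const (n : ℕ) (ρ : ℝ) (hρ : 0 < ρ) (c : ℝ) (M : ℕ) (hM : 1 ≤ M) :
    (Tpoly n ρ)^[M] (Polynomial.C c) = 0 := by
  have h1 : Tpoly n ρ (Polynomial.C c) = 0 := by
    have : Polynomial.C c = c • (1 : Polynomial ℝ) := by
      rw [Polynomial.smul_eq_C_mul, mul_one]
    rw [this, Tpoly_smul n ρ hρ, Tpoly, Upoly_one n ρ hρ, sub_self, smul_zero]
  obtain ⟨M', rfl⟩ : ∃ M', M = M' + 1 := ⟨M - 1, by omega⟩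
  rw [Function.iterate_succ_apply, h1, Tpoly_iter_zero n ρ hρ]

lemma tuo_of_bound {F : ℕ → ℝ → ℝ} {s : Set ℝ} {u : ℕ → ℝ}
    (hu : Filter.Tendsto u Filter.atTop (nhds 0))
    (hb : ∀ M, ∀ x ∈ s, |F M x| ≤ u M) :
    TendstoUniformlyOn F (fun _ => 0) Filter.atTop s := by
  rw [Metric.tendstoUniformlyOn_iff]
  intro ε hε
  filter_upwards [hu.eventually (Metric.ball_mem_nhds (0:ℝ) hε)] with M hM x hx
  have hu' : |u M| < ε := by simpa [Real.dist_eq] using hM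
  calc dist 0 (F M x) = |F M x| := by rw [dist_comm, Real.dist_eq, sub_zero]
    _ ≤ u M := hb M x hx
    _ ≤ |u M| := le_abs_self _
    _ < ε := hu'

lemma tuo_eig (q : Polynomial ℝ) {r : ℝ} (hr0 : 0 ≤ r) (hr1 : r < 1) (c : ℝ) :
    TendstoUniformlyOn (fun (M : ℕ) (x : ℝ) => ((c * r ^ M) • q).eval x)
      (fun _ => 0) Filter.atTop (Set.Icc 0 1) := by
  obtain ⟨B, hB⟩ := (isCompact_Icc (a := (0:ℝ)) (b := 1)).exists_bound_of_continuousOn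
    (Polynomial.continuous q).continuousOn
  have hBnn : 0 ≤ B := le_trans (norm_nonneg _) (hB 0 (by norm_num))
  apply tuo_of_bound (u := fun M => |c| * B * r ^ M)
  · simpa using (tendsto_pow_atTop_nhds_zero_of_lt_one hr0 hr1).const_mul (|c| * B)
  · intro M x hx
    rw [Polynomial.eval_smul, smul_eq_mul, abs_mul, abs_mul, abs_pow,
      abs_of_nonneg hr0]
    have hq : |q.eval x| ≤ B := by simpa [Real.norm_eq_abs] using hB x hx
    calc |c| * r ^ M * |q.eval x| ≤ |c| * r ^ M * B := by
          exact mul_le_mul_of_nonneg_left hq (by positivity)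
      _ = |c| * B * r ^ M := by ring

lemma main_ind (n : ℕ) (ρ : ℝ) (hρ : 0 < ρ)
    (q : Fin (n + 1) → Polynomial ℝ) (lam : Fin (n + 1) → ℝ)
    (hdeg : ∀ k, (q k).natDegree = (k : ℕ))
    (heig : ∀ k, ∀ x : ℝ, Uop n ρ (fun t => (q k).eval t) x = lam k * (q k).eval x)
    (hlam_le : ∀ k : Fin (n + 1), 1 ≤ (k : ℕ) → 0 ≤ 1 - lam k ∧ 1 - lam k < 1) :
    ∀ m, m ≤ n → ∀ p : Polynomial ℝ, p.natDegree ≤ m →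
      TendstoUniformlyOn (fun (M : ℕ) (x : ℝ) => (((Tpoly n ρ)^[M]) p).eval x)
        (fun _ => 0) Filter.atTop (Set.Icc 0 1) := by
  intro m
  induction m with
  | zero =>
    intro _ p hp
    obtain ⟨c, rfl⟩ := Polynomial.natDegree_eq_zero.mp (Nat.le_zero.mp hp)
    rw [Metric.tendstoUniformlyOn_iff]
    intro ε hε
    filter_upwards [Filter.eventually_ge_atTop 1] with M hM x hx
    rw [Tpoly_iter_const n ρ hρ c M hM]
    simpa using hε
  | succ m ih =>
    intro hmn p hp
    by_cases hcase : p.natDegree ≤ m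
    · exact ih (le_trans (Nat.le_succ m) hmn) p hcase
    have hdp : p.natDegree = m + 1 := le_antisymm hp (Nat.succ_le_of_lt (lt_of_not_ge hcase))
    set k : Fin (n + 1) := ⟨m + 1, by omega⟩ with hkdef
    have hk1 : 1 ≤ (k : ℕ) := by simp [hkdef]
    have hqdeg : (q k).natDegree = m + 1 := hdeg k
    have hqk0 : q k ≠ 0 := by
      intro h
      rw [h, Polynomial.natDegree_zero] at hqdeg
      omega
    have hp0 : p ≠ 0 := by
      intro h
      rw [h, Polynomial.natDegree_zero] at hdp
      omega
    have hlcq : (q k).leadingCoeff ≠ 0 := Polynomial.leadingCoeff_ne_zero.mpr hqk0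
    set c := p.leadingCoeff / (q k).leadingCoeff with hc
    have hc0 : c ≠ 0 := div_ne_zero (Polynomial.leadingCoeff_ne_zero.mpr hp0) hlcq
    have hdeg_eq : p.degree = (c • q k).degree := by
      rw [Polynomial.smul_eq_C_mul, Polynomial.degree_C_mul hc0,
        Polynomial.degree_eq_natDegree hp0, Polynomial.degree_eq_natDegree hqk0, hdp, hqdeg]
    have hlc_eq : p.leadingCoeff = (c • q k).leadingCoeff := by
      rw [Polynomial.smul_eq_C_mul, Polynomial.leadingCoeff_mul, Polynomial.leadingCoeff_C,
        hc, div_mul_cancel₀ _ hlcq]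
    set r := p - c • q k with hr
    have hdegr : r.natDegree ≤ m := by
      by_cases hr0 : r = 0
      · rw [hr0, Polynomial.natDegree_zero]; omega
      · have hlt : r.degree < p.degree := Polynomial.degree_sub_lt hdeg_eq hp0 hlc_eq
        have := Polynomial.natDegree_lt_natDegree hr0 hlt
        omega
    have hpsplit : p = c • q k + r := by rw [hr]; ring
    obtain ⟨h0, h1⟩ := hlam_le k hk1
    have hTUO1 := tuo_eig (q k) h0 h1 c
    have hTUO2 := ih (le_trans (Nat.le_succ m) hmn) r hdegr
    have hiter : ∀ M, ((Tpoly n ρ)^[M]) p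
        = (c * (1 - lam k) ^ M) • q k + ((Tpoly n ρ)^[M]) r := by
      intro M
      rw [hpsplit, Tpoly_iter_add n ρ hρ, Tpoly_iter_smul n ρ hρ,
        Tpoly_iter_eig n ρ hρ (q k) (lam k) (heig k), smul_smul]
    have heq : (fun (M : ℕ) (x : ℝ) => (((Tpoly n ρ)^[M]) p).eval x)
        = fun (M : ℕ) (x : ℝ) => ((c * (1 - lam k) ^ M) • q k).eval x
            + (((Tpoly n ρ)^[M]) r).eval x := by
      funext M x
      rw [hiter M, Polynomial.eval_add]
    rw [heq]
    have h := hTUO1.add hTUO2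
    have e0 : ((fun _:ℝ => (0:ℝ)) + fun _:ℝ => (0:ℝ)) = fun _:ℝ => (0:ℝ) := by
      funext; simp
    rw [e0] at h
    exact h

/-- Let `n ≥ 1`, `ρ > 0`, and suppose `U_n^ρ` has eigenpolynomials `q_k` of exact
degree `k` with eigenvalues `1 = λ₀ = λ₁ ≥ λ₂ ≥ … ≥ λ_n > 0` and `λ_k < 1` for
`k ≥ 2`. Then for every continuous `f`, `⊕^M U_n^ρ f → L_n^ρ f` uniformly on
`[0,1]` as `M → ∞`. -/
theorem boolSum_tendsto_L (n : ℕ) (hn : 1 ≤ n) (ρ : ℝ) (hρ : 0 < ρ)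
    (q : Fin (n + 1) → Polynomial ℝ) (lam : Fin (n + 1) → ℝ)
    (hdeg : ∀ k, (q k).natDegree = (k : ℕ))
    (heig : ∀ k, ∀ x : ℝ, Uop n ρ (fun t => (q k).eval t) x = lam k * (q k).eval x)
    (hlam0 : lam 0 = 1) (hlam1 : lam 1 = 1)
    (hlamanti : ∀ j k : Fin (n + 1), 1 ≤ (j : ℕ) → j ≤ k → lam k ≤ lam j)
    (hlamlt : ∀ k : Fin (n + 1), 2 ≤ (k : ℕ) → lam k < 1)
    (hlampos : 0 < lam (Fin.last n))
    (f : ℝ → ℝ) (hf : ContinuousOn f (Set.Icc 0 1))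
    (L : Polynomial ℝ) (hLdeg : L.natDegree ≤ n)
    (hL : ∀ k ≤ n, Ffun n k ρ (fun x => L.eval x) = Ffun n k ρ f) :
    TendstoUniformlyOn (fun (M : ℕ) (x : ℝ) => boolSum n ρ M f x)
      (fun x => L.eval x) Filter.atTop (Set.Icc 0 1) := by
  -- eigenvalue bounds
  have hone : ((1 : Fin (n + 1)) : ℕ) = 1 := by
    rw [Fin.val_one']
    exact Nat.mod_eq_of_lt (by omega)
  have hlam_le : ∀ k : Fin (n + 1), 1 ≤ (k : ℕ) → 0 ≤ 1 - lam k ∧ 1 - lam k < 1 := by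
    intro k hk1
    constructor
    · have h1k : (1 : Fin (n + 1)) ≤ k := by
        rw [Fin.le_def, hone]; exact hk1
      have := hlamanti 1 k (by rw [hone]) h1k
      rw [hlam1] at this
      linarith
    · have hkl : k ≤ Fin.last n := Fin.le_last k
      have := hlamanti k (Fin.last n) hk1 hkl
      linarith
  -- decomposition of the iterates
  have hdecomp : ∀ M, (fun (g : ℝ → ℝ) (y : ℝ) => g y - Uop n ρ g y)^[M] f
      = fun x => (((Tpoly n ρ)^[M]) L).eval x + (f x - L.eval x) := by
    intro M
    induction M with
    | zero => funext x; simp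
    | succ M ih =>
      rw [Function.iterate_succ_apply', ih, Function.iterate_succ_apply']
      funext x
      set h := ((Tpoly n ρ)^[M]) L with hh
      have hU : Uop n ρ (fun y => h.eval y + (f y - L.eval y))
          = Uop n ρ (fun y => h.eval y) := by
        have e1 : (fun y => h.eval y + (f y - L.eval y))
            = fun y => (h - L).eval y + f y := by
          funext y; rw [Polynomial.eval_sub]; ring
        have e2 : (fun y => (h - L).eval y + L.eval y) = fun y => h.eval y := by
          funext y; rw [← Polynomial.eval_add, sub_add_cancel]
        rw [e1, Uop_add n ρ hρ (Polynomial.continuous (h - L)).continuousOn hf]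
        rw [Uop_congrF n ρ (fun k hk => (hL k hk).symm)]
        rw [← Uop_add n ρ hρ (Polynomial.continuous (h - L)).continuousOn
          (Polynomial.continuous L).continuousOn, e2]
      show (fun y => h.eval y + (f y - L.eval y)) x
          - Uop n ρ (fun y => h.eval y + (f y - L.eval y)) x
          = (Tpoly n ρ h).eval x + (f x - L.eval x)
      rw [hU, Tpoly, Polynomial.eval_sub, Upoly_eval]
      ring
  -- main convergence for L
  have hmain := main_ind n ρ hρ q lam hdeg heig hlam_le n le_rfl L hLdeg
  have hbool : (fun (M : ℕ) (x : ℝ) => boolSum n ρ M f x)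
      = fun (M : ℕ) (x : ℝ) => L.eval x - (((Tpoly n ρ)^[M]) L).eval x := by
    funext M x
    rw [boolSum, hdecomp M]
    ring
  rw [hbool]
  rw [Metric.tendstoUniformlyOn_iff] at hmain ⊢
  intro ε hε
  filter_upwards [hmain ε hε] with M hM x hx
  have h := hM x hx
  simpa [Real.dist_eq, sub_sub_cancel, zero_sub, abs_neg] using h
end

section
/- For every integer n ≥ 1, every ρ > 0, and every continuous function f : [0,1] → ℝ, one has U_n^ρ f = B_n(𝔅_{nρ} f), where B_n is the classical Bernstein operator B_n g(x) = ∑_{k=0}^n g(k/n) p_{n,k}(x) and 𝔅_{nρ} is the Lupaş–Mühlbach Beta operator defined by 𝔅_r f(0) = f(0), 𝔅_r f(1) = f(1), and 𝔅_r f(x) = (1/B(rx, r−rx)) ∫₀¹ t^{rx−1}(1−t)^{r−rx−1} f(t) dt for 0 < x < 1. -/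
open MeasureTheory

/-- The Lupaş–Mühlbach Beta operator `𝔅_r`. -/
noncomputable def lupasBeta (r : ℝ) (f : ℝ → ℝ) (x : ℝ) : ℝ :=
  if x = 0 then f 0
  else if x = 1 then f 1
  else (betaFn (r * x) (r - r * x))⁻¹ *
    ∫ t in (0:ℝ)..1, t ^ (r * x - 1) * (1 - t) ^ (r - r * x - 1) * f t

/-- `U_n^ρ = B_n ∘ 𝔅_{nρ}`: for every `n ≥ 1`, `ρ > 0` and continuous
`f : [0,1] → ℝ`, one has `U_n^ρ f = B_n (𝔅_{nρ} f)`, where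
`B_n g(x) = ∑_{k=0}^n g(k/n) p_{n,k}(x)` is the Bernstein operator. -/
theorem Uop_eq_bernstein_comp_beta (n : ℕ) (hn : 1 ≤ n) (ρ : ℝ) (hρ : 0 < ρ)
    (f : ℝ → ℝ) (hf : ContinuousOn f (Set.Icc 0 1)) :
    ∀ x ∈ Set.Icc (0 : ℝ) 1,
      Uop n ρ f x =
        ∑ k ∈ Finset.range (n + 1),
          lupasBeta ((n : ℝ) * ρ) f ((k : ℝ) / (n : ℝ)) * bern n k x := by
  intro x hx
  have hn0 : (n : ℝ) ≠ 0 := Nat.cast_ne_zero.mpr (by omega)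
  unfold Uop
  refine Finset.sum_congr rfl fun k hk => ?_
  congr 1
  unfold Ffun lupasBeta
  rcases eq_or_ne k 0 with h0 | h0
  · simp [h0]
  · rcases eq_or_ne k n with h1 | h1
    · have hdiv : (k : ℝ) / n = 1 := by rw [h1]; field_simp
      simp [h0, h1, hdiv, show n ≠ 0 by omega]
    · have hkn : k < n := by
        have := Finset.mem_range.mp hk; omega
      have hne0 : (k : ℝ) / n ≠ 0 := by
        simp [div_eq_zero_iff, hn0, Nat.cast_ne_zero.mpr h0]
      have hne1 : (k : ℝ) / n ≠ 1 :=
        ne_of_lt ((div_lt_one (by positivity)).mpr (by exact_mod_cast hkn))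
      have e1 : (n : ℝ) * ρ * ((k : ℝ) / n) = (k : ℝ) * ρ := by
        field_simp
      have e2 : (n : ℝ) * ρ - (n : ℝ) * ρ * ((k : ℝ) / n) = ((n : ℝ) - k) * ρ := by
        field_simp
      simp only [h0, h1, hne0, hne1, if_false, e1, e2, sub_mul]
end
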